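/- Let 0 < p ≤ 1, 0 < ρ < 1, c > 0, K > 0. Let (ε_t)_{t≥1} be i.i.d. real-valued random variables on a probability space (Ω, 𝓕, P) with E|ε_1|^p ≤ K. Let (c_m)_{m≥0} be real numbers with |c_m| ≤ c ρ^m, and define the cumulated process x_t = Σ_{s=1}^t ε_s and the moving average u_t = Σ_{m=0}^{t−1} c_m ε_{t−m}. Then there exists a constant c₀, depending only on p, ρ, c and K, such that for every T ≥ 1, E| Σ_{t=1}^T x_t u_t |^{p/2} ≤ c₀ T. -/

import Mathlib

open MeasureTheory ProbabilityTheory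

private lemma rpow_add_le_add_rpow_real {a b q : ℝ} (ha : 0 ≤ a) (hb : 0 ≤ b)
    (hq0 : 0 ≤ q) (hq1 : q ≤ 1) : (a + b) ^ q ≤ a ^ q + b ^ q := by
  have h := NNReal.rpow_add_le_add_rpow a.toNNReal b.toNNReal hq0 hq1
  have h' := NNReal.coe_le_coe.2 h
  push_cast [NNReal.coe_rpow] at h'
  rwa [Real.coe_toNNReal _ ha, Real.coe_toNNReal _ hb] at h'

private lemma abs_sum_rpow_le {ι : Type*} (s : Finset ι) (f : ι → ℝ) {q : ℝ}
    (hq0 : 0 < q) (hq1 : q ≤ 1) : |∑ i ∈ s, f i| ^ q ≤ ∑ i ∈ s, |f i| ^ q := by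
  induction s using Finset.cons_induction with
  | empty => simp [Real.zero_rpow hq0.ne']
  | cons a s ha ih =>
      rw [Finset.sum_cons, Finset.sum_cons]
      calc |f a + ∑ i ∈ s, f i| ^ q ≤ (|f a| + |∑ i ∈ s, f i|) ^ q :=
            Real.rpow_le_rpow (abs_nonneg _) (abs_add_le _ _) hq0.le
        _ ≤ |f a| ^ q + |∑ i ∈ s, f i| ^ q :=
            rpow_add_le_add_rpow_real (abs_nonneg _) (abs_nonneg _) hq0.le hq1
        _ ≤ |f a| ^ q + ∑ i ∈ s, |f i| ^ q := add_le_add (le_refl _) ih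

private lemma geom_sum_le_inv {r : ℝ} (h0 : 0 ≤ r) (h1 : r < 1) (n : ℕ) :
    ∑ i ∈ Finset.range n, r ^ i ≤ (1 - r)⁻¹ := by
  have h2 : 0 < 1 - r := by linarith
  rw [inv_eq_one_div, le_div_iff₀ h2]
  have h3 : (∑ i ∈ Finset.range n, r ^ i) * (1 - r) = 1 - r ^ n := by
    linear_combination -geom_sum_mul r n
  rw [h3]
  nlinarith [pow_nonneg h0 n]

private lemma lintegral_abs_sum_rpow_le {Ω : Type} [MeasurableSpace Ω] (P : Measure Ω)
    {ι : Type*} (s : Finset ι) (f : ι → Ω → ℝ) (hf : ∀ i, Measurable (f i)) {q : ℝ}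
    (hq0 : 0 < q) (hq1 : q ≤ 1) :
    ∫⁻ ω, ENNReal.ofReal (|∑ i ∈ s, f i ω| ^ q) ∂P
      ≤ ∑ i ∈ s, ∫⁻ ω, ENNReal.ofReal (|f i ω| ^ q) ∂P := by
  have hm : ∀ r : ℝ, Measurable fun x : ℝ => ENNReal.ofReal (|x| ^ r) := fun r => by
    measurability
  calc ∫⁻ ω, ENNReal.ofReal (|∑ i ∈ s, f i ω| ^ q) ∂P
      ≤ ∫⁻ ω, ∑ i ∈ s, ENNReal.ofReal (|f i ω| ^ q) ∂P := by
        refine lintegral_mono fun ω => ?_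
        calc ENNReal.ofReal (|∑ i ∈ s, f i ω| ^ q)
            ≤ ENNReal.ofReal (∑ i ∈ s, |f i ω| ^ q) :=
              ENNReal.ofReal_le_ofReal (abs_sum_rpow_le s (fun i => f i ω) hq0 hq1)
          _ = ∑ i ∈ s, ENNReal.ofReal (|f i ω| ^ q) :=
              ENNReal.ofReal_sum_of_nonneg (fun i _ => Real.rpow_nonneg (abs_nonneg _) q)
    _ = ∑ i ∈ s, ∫⁻ ω, ENNReal.ofReal (|f i ω| ^ q) ∂P :=
        lintegral_finset_sum s (fun i _ => (hm q).comp (hf i))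

/-- Let `0 < p ≤ 1`, `0 < ρ < 1`, `c > 0`, `K > 0`.  There is a constant `c₀ > 0` depending only
on `p, ρ, c, K` such that: for any probability space and i.i.d. real random variables
`(ε_t)_{t ≥ 1}` with `E|ε_1|^p ≤ K`, and any reals `(c_m)_{m ≥ 0}` with `|c_m| ≤ c ρ^m`, setting
`x_t = ∑_{s=1}^t ε_s` and `u_t = ∑_{m=0}^{t−1} c_m ε_{t−m}`, one has
`E|∑_{t=1}^T x_t u_t|^{p/2} ≤ c₀ T` for every `T ≥ 1`. -/
theorem cross_product_moment_bound (p ρ c K : ℝ)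
    (hp0 : 0 < p) (hp1 : p ≤ 1) (hρ0 : 0 < ρ) (hρ1 : ρ < 1) (hc : 0 < c) (hK : 0 < K) :
    ∃ c₀ : ℝ, 0 < c₀ ∧
      ∀ (Ω : Type) [MeasurableSpace Ω] (P : Measure Ω), IsProbabilityMeasure P →
        ∀ ε : ℕ → Ω → ℝ,
          (∀ t, Measurable (ε t)) →
          iIndepFun (fun n => ε (n + 1)) P →
          (∀ s t : ℕ, IdentDistrib (ε (s + 1)) (ε (t + 1)) P P) →
          (∫⁻ ω, ENNReal.ofReal (|ε 1 ω| ^ p) ∂P ≤ ENNReal.ofReal K) →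
          ∀ cs : ℕ → ℝ,
            (∀ m, |cs m| ≤ c * ρ ^ m) →
            ∀ T : ℕ, 1 ≤ T →
              ∫⁻ ω, ENNReal.ofReal
                  (|∑ t ∈ Finset.Icc 1 T, (∑ s ∈ Finset.Icc 1 t, ε s ω) *
                      (∑ m ∈ Finset.range t, cs m * ε (t - m) ω)| ^ (p / 2)) ∂P ≤
                ENNReal.ofReal (c₀ * T) := by
  classical
  set q : ℝ := p / 2 with hqdef
  have hq0 : 0 < q := by positivity
  have hq1 : q ≤ 1 := by rw [hqdef]; linarith
  have hρq1 : ρ ^ q < 1 := Real.rpow_lt_one hρ0.le hρ1 hq0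
  have hρp1 : ρ ^ p < 1 := Real.rpow_lt_one hρ0.le hρ1 hp0
  have hρq0 : (0:ℝ) ≤ ρ ^ q := Real.rpow_nonneg hρ0.le q
  have hρp0 : (0:ℝ) ≤ ρ ^ p := Real.rpow_nonneg hρ0.le p
  have h1ρq : 0 < 1 - ρ ^ q := by linarith
  have h1ρp : 0 < 1 - ρ ^ p := by linarith
  set Cq : ℝ := c ^ q * K * (1 - ρ ^ q)⁻¹ with hCqdef
  set Cp : ℝ := c ^ p * (K * K) * (1 - ρ ^ p)⁻¹ with hCpdef
  have hcq0 : 0 < c ^ q := Real.rpow_pos_of_pos hc q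
  have hcp0 : 0 < c ^ p := Real.rpow_pos_of_pos hc p
  have hCq0 : 0 < Cq := by positivity
  have hCp0 : 0 < Cp := by positivity
  refine ⟨Cq + Cp ^ ((1:ℝ)/2), by positivity, ?_⟩
  intro Ω _ P hP ε hmeas hind hid hmom cs hcs T hT
  have mR : ∀ r : ℝ, Measurable fun x : ℝ => ENNReal.ofReal (|x| ^ r) := fun r => by
    measurability
  set F : ℕ → Ω → ENNReal := fun r ω => ENNReal.ofReal (|ε r ω| ^ p) with hFdef
  have hFmeas : ∀ r, Measurable (F r) := fun r => (mR p).comp (hmeas r)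
  have hFK : ∀ r, 1 ≤ r → ∫⁻ ω, F r ω ∂P ≤ ENNReal.ofReal K := by
    intro r hr
    have hid' : IdentDistrib (ε r) (ε 1) P P := by
      have h := hid (r - 1) 0
      rwa [Nat.sub_add_cancel hr] at h
    have heq := (hid'.comp (mR p)).lintegral_eq
    simp only [Function.comp] at heq
    calc ∫⁻ ω, F r ω ∂P = ∫⁻ ω, ENNReal.ofReal (|ε 1 ω| ^ p) ∂P := heq
      _ ≤ ENNReal.ofReal K := hmom
  have hindep : ∀ s r : ℕ, 1 ≤ s → 1 ≤ r → s ≠ r →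
      ∫⁻ ω, F s ω * F r ω ∂P = (∫⁻ ω, F s ω ∂P) * ∫⁻ ω, F r ω ∂P := by
    intro s r hs hr hsr
    have hne : s - 1 ≠ r - 1 := fun h => hsr (by omega)
    have h1 : IndepFun (ε ((s-1)+1)) (ε ((r-1)+1)) P := hind.indepFun hne
    rw [Nat.sub_add_cancel hs, Nat.sub_add_cancel hr] at h1
    have h2 : IndepFun (F s) (F r) P := h1.comp (mR p) (mR p)
    exact lintegral_mul_eq_lintegral_mul_lintegral_of_indepFun''
      (hFmeas s).aemeasurable (hFmeas r).aemeasurable h2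
  -- set up the index set
  set J : Finset (Σ _ : ℕ, ℕ × ℕ) :=
    (Finset.Icc 1 T).sigma (fun t => Finset.Icc 1 t ×ˢ Finset.range t) with hJdef
  set g : (Σ _ : ℕ, ℕ × ℕ) → Ω → ℝ :=
    fun j ω => ε j.2.1 ω * (cs j.2.2 * ε (j.1 - j.2.2) ω) with hgdef
  have hgmeas : ∀ j, Measurable (g j) := fun j => (hmeas _).mul (measurable_const.mul (hmeas _))
  have hsum : ∀ ω : Ω, (∑ t ∈ Finset.Icc 1 T, (∑ s ∈ Finset.Icc 1 t, ε s ω) *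
      (∑ m ∈ Finset.range t, cs m * ε (t - m) ω)) = ∑ j ∈ J, g j ω := by
    intro ω
    rw [hJdef, Finset.sum_sigma]
    refine Finset.sum_congr rfl fun t ht => ?_
    rw [Finset.sum_mul_sum, Finset.sum_product]
  set d : (Σ _ : ℕ, ℕ × ℕ) → Prop := fun j => j.2.1 = j.1 - j.2.2 with hddef
  set Jd : Finset (Σ _ : ℕ, ℕ × ℕ) := J.filter d with hJddef
  set Jo : Finset (Σ _ : ℕ, ℕ × ℕ) := J.filter (fun j => ¬ d j) with hJodef
  -- membership unpacking
  have hmemJ : ∀ j ∈ J, 1 ≤ j.1 ∧ j.1 ≤ T ∧ 1 ≤ j.2.1 ∧ j.2.1 ≤ j.1 ∧ j.2.2 < j.1 := by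
    intro j hj
    simp only [hJdef, Finset.mem_sigma, Finset.mem_product, Finset.mem_Icc,
      Finset.mem_range] at hj
    exact ⟨hj.1.1, hj.1.2, hj.2.1.1, hj.2.1.2, hj.2.2⟩
  -- the split
  have hsplit : ∀ ω : Ω, (∑ j ∈ J, g j ω) = (∑ j ∈ Jd, g j ω) + ∑ j ∈ Jo, g j ω :=
    fun ω => (Finset.sum_filter_add_sum_filter_not J d _).symm
  -- first inequality: split diagonal and off-diagonal
  have key1 : ∫⁻ ω, ENNReal.ofReal
        (|∑ t ∈ Finset.Icc 1 T, (∑ s ∈ Finset.Icc 1 t, ε s ω) *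
            (∑ m ∈ Finset.range t, cs m * ε (t - m) ω)| ^ q) ∂P ≤
      (∫⁻ ω, ENNReal.ofReal (|∑ j ∈ Jd, g j ω| ^ q) ∂P)
      + ∫⁻ ω, ENNReal.ofReal (|∑ j ∈ Jo, g j ω| ^ q) ∂P := by
    have hpt : ∀ ω : Ω, ENNReal.ofReal
        (|∑ t ∈ Finset.Icc 1 T, (∑ s ∈ Finset.Icc 1 t, ε s ω) *
            (∑ m ∈ Finset.range t, cs m * ε (t - m) ω)| ^ q) ≤
        ENNReal.ofReal (|∑ j ∈ Jd, g j ω| ^ q) + ENNReal.ofReal (|∑ j ∈ Jo, g j ω| ^ q) := by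
      intro ω
      rw [hsum ω, hsplit ω]
      calc ENNReal.ofReal (|(∑ j ∈ Jd, g j ω) + ∑ j ∈ Jo, g j ω| ^ q)
          ≤ ENNReal.ofReal (|∑ j ∈ Jd, g j ω| ^ q + |∑ j ∈ Jo, g j ω| ^ q) := by
            refine ENNReal.ofReal_le_ofReal ?_
            calc |(∑ j ∈ Jd, g j ω) + ∑ j ∈ Jo, g j ω| ^ q
                ≤ (|∑ j ∈ Jd, g j ω| + |∑ j ∈ Jo, g j ω|) ^ q :=
                  Real.rpow_le_rpow (abs_nonneg _) (abs_add_le _ _) hq0.le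
              _ ≤ |∑ j ∈ Jd, g j ω| ^ q + |∑ j ∈ Jo, g j ω| ^ q :=
                  rpow_add_le_add_rpow_real (abs_nonneg _) (abs_nonneg _) hq0.le hq1
        _ = ENNReal.ofReal (|∑ j ∈ Jd, g j ω| ^ q) + ENNReal.ofReal (|∑ j ∈ Jo, g j ω| ^ q) :=
            ENNReal.ofReal_add (Real.rpow_nonneg (abs_nonneg _) q)
              (Real.rpow_nonneg (abs_nonneg _) q)
    calc ∫⁻ ω, ENNReal.ofReal
          (|∑ t ∈ Finset.Icc 1 T, (∑ s ∈ Finset.Icc 1 t, ε s ω) *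
              (∑ m ∈ Finset.range t, cs m * ε (t - m) ω)| ^ q) ∂P
        ≤ ∫⁻ ω, (ENNReal.ofReal (|∑ j ∈ Jd, g j ω| ^ q)
            + ENNReal.ofReal (|∑ j ∈ Jo, g j ω| ^ q)) ∂P := lintegral_mono hpt
      _ = (∫⁻ ω, ENNReal.ofReal (|∑ j ∈ Jd, g j ω| ^ q) ∂P)
          + ∫⁻ ω, ENNReal.ofReal (|∑ j ∈ Jo, g j ω| ^ q) ∂P :=
          lintegral_add_left ((mR q).comp (Finset.measurable_sum _ fun j _ => hgmeas j)) _
  -- coefficient bound at exponent q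
  have hcsq : ∀ m : ℕ, |cs m| ^ q ≤ c ^ q * (ρ ^ q) ^ m := by
    intro m
    calc |cs m| ^ q ≤ (c * ρ ^ m) ^ q := Real.rpow_le_rpow (abs_nonneg _) (hcs m) hq0.le
      _ = c ^ q * (ρ ^ m) ^ q := Real.mul_rpow hc.le (pow_nonneg hρ0.le m)
      _ = c ^ q * (ρ ^ q) ^ m := by
          rw [← Real.rpow_natCast ρ m, ← Real.rpow_mul hρ0.le, mul_comm (m:ℝ) q,
            Real.rpow_mul hρ0.le, Real.rpow_natCast]
  have hcsp : ∀ m : ℕ, |cs m| ^ p ≤ c ^ p * (ρ ^ p) ^ m := by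
    intro m
    calc |cs m| ^ p ≤ (c * ρ ^ m) ^ p := Real.rpow_le_rpow (abs_nonneg _) (hcs m) hp0.le
      _ = c ^ p * (ρ ^ m) ^ p := Real.mul_rpow hc.le (pow_nonneg hρ0.le m)
      _ = c ^ p * (ρ ^ p) ^ m := by
          rw [← Real.rpow_natCast ρ m, ← Real.rpow_mul hρ0.le, mul_comm (m:ℝ) p,
            Real.rpow_mul hρ0.le, Real.rpow_natCast]
  -- diagonal term bound
  have diag_term : ∀ j ∈ Jd, (∫⁻ ω, ENNReal.ofReal (|g j ω| ^ q) ∂P)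
      ≤ ENNReal.ofReal (c ^ q * (ρ ^ q) ^ j.2.2 * K) := by
    intro j hj
    have hjJ : j ∈ J := Finset.filter_subset _ _ hj
    have hjd : d j := (Finset.mem_filter.1 hj).2
    have hmem := hmemJ j hjJ
    obtain ⟨t, s, m⟩ := j
    have ht1 : 1 ≤ t := hmem.1
    have htT : t ≤ T := hmem.2.1
    have hs1 : 1 ≤ s := hmem.2.2.1
    have hst : s ≤ t := hmem.2.2.2.1
    have hmt : m < t := hmem.2.2.2.2
    simp only [hddef] at hjd
    have hr1 : 1 ≤ t - m := by omega
    have hpt : ∀ ω, ENNReal.ofReal (|g ⟨t, (s, m)⟩ ω| ^ q)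
        = ENNReal.ofReal (|cs m| ^ q) * F (t - m) ω := by
      intro ω
      have h1 : |g ⟨t, (s, m)⟩ ω| = |cs m| * (|ε (t - m) ω| * |ε (t - m) ω|) := by
        simp only [hgdef]
        rw [hjd, abs_mul, abs_mul]
        ring
      have h2 : (|ε (t - m) ω| * |ε (t - m) ω|) ^ q = |ε (t - m) ω| ^ p := by
        have h3 : |ε (t - m) ω| * |ε (t - m) ω| = |ε (t - m) ω| ^ (2:ℕ) := (sq _).symm
        have hexp : ((2:ℕ):ℝ) * q = p := by rw [hqdef]; push_cast; ring
        rw [h3, ← Real.rpow_natCast (|ε (t - m) ω|) 2, ← Real.rpow_mul (abs_nonneg _), hexp]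
      rw [h1, Real.mul_rpow (abs_nonneg _) (by positivity), h2,
        ENNReal.ofReal_mul (Real.rpow_nonneg (abs_nonneg _) q)]
    calc (∫⁻ ω, ENNReal.ofReal (|g ⟨t, (s, m)⟩ ω| ^ q) ∂P)
        = ∫⁻ ω, ENNReal.ofReal (|cs m| ^ q) * F (t - m) ω ∂P := lintegral_congr hpt
      _ = ENNReal.ofReal (|cs m| ^ q) * ∫⁻ ω, F (t - m) ω ∂P :=
          lintegral_const_mul _ (hFmeas _)
      _ ≤ ENNReal.ofReal (|cs m| ^ q) * ENNReal.ofReal K := mul_le_mul_right (hFK _ hr1) _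
      _ ≤ ENNReal.ofReal (c ^ q * (ρ ^ q) ^ m) * ENNReal.ofReal K :=
          mul_le_mul_left (ENNReal.ofReal_le_ofReal (hcsq m)) _
      _ = ENNReal.ofReal (c ^ q * (ρ ^ q) ^ m * K) := by
          rw [← ENNReal.ofReal_mul (by positivity)]
  -- diagonal sum bound
  have diag_bound : (∫⁻ ω, ENNReal.ofReal (|∑ j ∈ Jd, g j ω| ^ q) ∂P)
      ≤ (T : ENNReal) * ENNReal.ofReal Cq := by
    set J' : Finset (Σ _ : ℕ, ℕ × ℕ) :=
      (Finset.Icc 1 T).sigma (fun t => (Finset.range t).image (fun m => (t - m, m))) with hJ'def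
    have hsub : Jd ⊆ J' := by
      intro j hj
      have hjJ : j ∈ J := Finset.filter_subset _ _ hj
      have hjd : d j := (Finset.mem_filter.1 hj).2
      have hmem := hmemJ j hjJ
      obtain ⟨t, s, m⟩ := j
      have ht1 : 1 ≤ t := hmem.1
      have htT : t ≤ T := hmem.2.1
      have hmt : m < t := hmem.2.2.2.2
      simp only [hddef] at hjd
      rw [hJ'def, Finset.mem_sigma, Finset.mem_image]
      exact ⟨Finset.mem_Icc.2 ⟨ht1, htT⟩, ⟨m, Finset.mem_range.2 hmt, by
        simp [Prod.ext_iff, hjd.symm]⟩⟩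
    have hgeomq : ∀ t : ℕ, (∑ m ∈ Finset.range t,
        ENNReal.ofReal (c ^ q * (ρ ^ q) ^ m * K)) ≤ ENNReal.ofReal Cq := by
      intro t
      rw [← ENNReal.ofReal_sum_of_nonneg (fun m _ => by positivity)]
      refine ENNReal.ofReal_le_ofReal ?_
      have h1 : (∑ m ∈ Finset.range t, c ^ q * (ρ ^ q) ^ m * K)
          = (c ^ q * K) * ∑ m ∈ Finset.range t, (ρ ^ q) ^ m := by
        rw [Finset.mul_sum]; exact Finset.sum_congr rfl fun m _ => by ring
      rw [h1, hCqdef]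
      calc (c ^ q * K) * ∑ m ∈ Finset.range t, (ρ ^ q) ^ m
          ≤ (c ^ q * K) * (1 - ρ ^ q)⁻¹ :=
            mul_le_mul_of_nonneg_left (geom_sum_le_inv hρq0 hρq1 t) (by positivity)
        _ = c ^ q * K * (1 - ρ ^ q)⁻¹ := by ring
    calc (∫⁻ ω, ENNReal.ofReal (|∑ j ∈ Jd, g j ω| ^ q) ∂P)
        ≤ ∑ j ∈ Jd, ∫⁻ ω, ENNReal.ofReal (|g j ω| ^ q) ∂P :=
          lintegral_abs_sum_rpow_le P Jd g (fun j => hgmeas j) hq0 hq1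
      _ ≤ ∑ j ∈ Jd, ENNReal.ofReal (c ^ q * (ρ ^ q) ^ j.2.2 * K) :=
          Finset.sum_le_sum diag_term
      _ ≤ ∑ j ∈ J', ENNReal.ofReal (c ^ q * (ρ ^ q) ^ j.2.2 * K) :=
          Finset.sum_le_sum_of_subset hsub
      _ = ∑ t ∈ Finset.Icc 1 T, ∑ x ∈ (Finset.range t).image (fun m => (t - m, m)),
            ENNReal.ofReal (c ^ q * (ρ ^ q) ^ x.2 * K) := by
          rw [hJ'def, Finset.sum_sigma]
      _ = ∑ t ∈ Finset.Icc 1 T, ∑ m ∈ Finset.range t,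
            ENNReal.ofReal (c ^ q * (ρ ^ q) ^ m * K) := by
          refine Finset.sum_congr rfl fun t _ => ?_
          rw [Finset.sum_image (fun a _ b _ h => congrArg Prod.snd h)]
      _ ≤ ∑ t ∈ Finset.Icc 1 T, ENNReal.ofReal Cq :=
          Finset.sum_le_sum fun t _ => hgeomq t
      _ = (T : ENNReal) * ENNReal.ofReal Cq := by
          rw [Finset.sum_const, Nat.card_Icc]
          simp [nsmul_eq_mul]
  -- off-diagonal term bound at exponent p
  have offp_term : ∀ j ∈ Jo, (∫⁻ ω, ENNReal.ofReal (|g j ω| ^ p) ∂P)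
      ≤ ENNReal.ofReal (c ^ p * (ρ ^ p) ^ j.2.2 * (K * K)) := by
    intro j hj
    have hjJ : j ∈ J := Finset.filter_subset _ _ hj
    have hjd : ¬ d j := (Finset.mem_filter.1 hj).2
    have hmem := hmemJ j hjJ
    obtain ⟨t, s, m⟩ := j
    have ht1 : 1 ≤ t := hmem.1
    have htT : t ≤ T := hmem.2.1
    have hs1 : 1 ≤ s := hmem.2.2.1
    have hst : s ≤ t := hmem.2.2.2.1
    have hmt : m < t := hmem.2.2.2.2
    simp only [hddef] at hjd
    have hr1 : 1 ≤ t - m := by omega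
    have hpt : ∀ ω, ENNReal.ofReal (|g ⟨t, (s, m)⟩ ω| ^ p)
        = ENNReal.ofReal (|cs m| ^ p) * (F s ω * F (t - m) ω) := by
      intro ω
      have h1 : |g ⟨t, (s, m)⟩ ω| = |cs m| * (|ε s ω| * |ε (t - m) ω|) := by
        simp only [hgdef]
        rw [abs_mul, abs_mul]
        ring
      rw [h1, Real.mul_rpow (abs_nonneg _) (by positivity),
        Real.mul_rpow (abs_nonneg _) (abs_nonneg _),
        ENNReal.ofReal_mul (Real.rpow_nonneg (abs_nonneg _) p),
        ENNReal.ofReal_mul (Real.rpow_nonneg (abs_nonneg _) p)]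
    calc (∫⁻ ω, ENNReal.ofReal (|g ⟨t, (s, m)⟩ ω| ^ p) ∂P)
        = ∫⁻ ω, ENNReal.ofReal (|cs m| ^ p) * (F s ω * F (t - m) ω) ∂P :=
          lintegral_congr hpt
      _ = ENNReal.ofReal (|cs m| ^ p) * ∫⁻ ω, F s ω * F (t - m) ω ∂P :=
          lintegral_const_mul _ ((hFmeas s).mul (hFmeas _))
      _ = ENNReal.ofReal (|cs m| ^ p) * ((∫⁻ ω, F s ω ∂P) * ∫⁻ ω, F (t - m) ω ∂P) := by
          rw [hindep s (t - m) hs1 hr1 hjd]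
      _ ≤ ENNReal.ofReal (|cs m| ^ p) * (ENNReal.ofReal K * ENNReal.ofReal K) :=
          mul_le_mul_right (mul_le_mul' (hFK s hs1) (hFK _ hr1)) _
      _ ≤ ENNReal.ofReal (c ^ p * (ρ ^ p) ^ m) * (ENNReal.ofReal K * ENNReal.ofReal K) :=
          mul_le_mul_left (ENNReal.ofReal_le_ofReal (hcsp m)) _
      _ = ENNReal.ofReal (c ^ p * (ρ ^ p) ^ m * (K * K)) := by
          rw [← ENNReal.ofReal_mul hK.le, ← ENNReal.ofReal_mul (by positivity)]
  -- off-diagonal p-moment bound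
  have offp : (∫⁻ ω, ENNReal.ofReal (|∑ j ∈ Jo, g j ω| ^ p) ∂P)
      ≤ (T : ENNReal) * ((T : ENNReal) * ENNReal.ofReal Cp) := by
    have hgeomp : ∀ t : ℕ, (∑ m ∈ Finset.range t,
        ENNReal.ofReal (c ^ p * (ρ ^ p) ^ m * (K * K))) ≤ ENNReal.ofReal Cp := by
      intro t
      rw [← ENNReal.ofReal_sum_of_nonneg (fun m _ => by positivity)]
      refine ENNReal.ofReal_le_ofReal ?_
      have h1 : (∑ m ∈ Finset.range t, c ^ p * (ρ ^ p) ^ m * (K * K))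
          = (c ^ p * (K * K)) * ∑ m ∈ Finset.range t, (ρ ^ p) ^ m := by
        rw [Finset.mul_sum]; exact Finset.sum_congr rfl fun m _ => by ring
      rw [h1, hCpdef]
      calc (c ^ p * (K * K)) * ∑ m ∈ Finset.range t, (ρ ^ p) ^ m
          ≤ (c ^ p * (K * K)) * (1 - ρ ^ p)⁻¹ :=
            mul_le_mul_of_nonneg_left (geom_sum_le_inv hρp0 hρp1 t) (by positivity)
        _ = c ^ p * (K * K) * (1 - ρ ^ p)⁻¹ := by ring
    calc (∫⁻ ω, ENNReal.ofReal (|∑ j ∈ Jo, g j ω| ^ p) ∂P)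
        ≤ ∑ j ∈ Jo, ∫⁻ ω, ENNReal.ofReal (|g j ω| ^ p) ∂P :=
          lintegral_abs_sum_rpow_le P Jo g (fun j => hgmeas j) hp0 hp1
      _ ≤ ∑ j ∈ Jo, ENNReal.ofReal (c ^ p * (ρ ^ p) ^ j.2.2 * (K * K)) :=
          Finset.sum_le_sum offp_term
      _ ≤ ∑ j ∈ J, ENNReal.ofReal (c ^ p * (ρ ^ p) ^ j.2.2 * (K * K)) :=
          Finset.sum_le_sum_of_subset (Finset.filter_subset _ _)
      _ = ∑ t ∈ Finset.Icc 1 T, ∑ x ∈ Finset.Icc 1 t ×ˢ Finset.range t,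
            ENNReal.ofReal (c ^ p * (ρ ^ p) ^ x.2 * (K * K)) := by
          rw [hJdef, Finset.sum_sigma]
      _ = ∑ t ∈ Finset.Icc 1 T, ∑ s ∈ Finset.Icc 1 t, ∑ m ∈ Finset.range t,
            ENNReal.ofReal (c ^ p * (ρ ^ p) ^ m * (K * K)) := by
          refine Finset.sum_congr rfl fun t _ => ?_
          rw [Finset.sum_product]
      _ ≤ ∑ t ∈ Finset.Icc 1 T, (T : ENNReal) * ENNReal.ofReal Cp := by
          refine Finset.sum_le_sum fun t ht => ?_
          have htT : t ≤ T := (Finset.mem_Icc.1 ht).2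
          calc (∑ s ∈ Finset.Icc 1 t, ∑ m ∈ Finset.range t,
                ENNReal.ofReal (c ^ p * (ρ ^ p) ^ m * (K * K)))
              ≤ ∑ s ∈ Finset.Icc 1 t, ENNReal.ofReal Cp :=
                Finset.sum_le_sum fun s _ => hgeomp t
            _ = (t : ENNReal) * ENNReal.ofReal Cp := by
                rw [Finset.sum_const, Nat.card_Icc]
                simp [nsmul_eq_mul]
            _ ≤ (T : ENNReal) * ENNReal.ofReal Cp :=
                mul_le_mul_left (by exact_mod_cast Nat.cast_le.2 htT) _
      _ = (T : ENNReal) * ((T : ENNReal) * ENNReal.ofReal Cp) := by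
          rw [Finset.sum_const, Nat.card_Icc]
          simp [nsmul_eq_mul]
  -- Cauchy–Schwarz (Lyapunov) step for the off-diagonal part
  have offq : (∫⁻ ω, ENNReal.ofReal (|∑ j ∈ Jo, g j ω| ^ q) ∂P)
      ≤ (T : ENNReal) * ENNReal.ofReal (Cp ^ ((1:ℝ)/2)) := by
    have hSo_meas : Measurable fun ω => ∑ j ∈ Jo, g j ω :=
      Finset.measurable_sum _ fun j _ => hgmeas j
    have hf : Measurable fun ω => ENNReal.ofReal (|∑ j ∈ Jo, g j ω| ^ q) :=
      (mR q).comp hSo_meas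
    have hconj : Real.HolderConjugate 2 2 := Real.HolderConjugate.two_two
    have hCS := ENNReal.lintegral_mul_le_Lp_mul_Lq P hconj hf.aemeasurable
      (aemeasurable_const : AEMeasurable (fun _ : Ω => (1:ENNReal)) P)
    simp only [Pi.mul_apply, mul_one, ENNReal.one_rpow, lintegral_one, measure_univ,
      lintegral_const, one_mul] at hCS
    have hsq : ∀ ω : Ω, (ENNReal.ofReal (|∑ j ∈ Jo, g j ω| ^ q)) ^ (2:ℝ)
        = ENNReal.ofReal (|∑ j ∈ Jo, g j ω| ^ p) := by
      intro ω
      rw [ENNReal.ofReal_rpow_of_nonneg (Real.rpow_nonneg (abs_nonneg _) q) (by norm_num),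
        ← Real.rpow_mul (abs_nonneg _), show q * 2 = p by rw [hqdef]; ring]
    have hTn0 : (T : ENNReal) ≠ 0 := by
      simp only [ne_eq, Nat.cast_eq_zero]; omega
    calc (∫⁻ ω, ENNReal.ofReal (|∑ j ∈ Jo, g j ω| ^ q) ∂P)
        ≤ (∫⁻ ω, (ENNReal.ofReal (|∑ j ∈ Jo, g j ω| ^ q)) ^ (2:ℝ) ∂P) ^ ((1:ℝ)/2) := by
          simpa using hCS
      _ = (∫⁻ ω, ENNReal.ofReal (|∑ j ∈ Jo, g j ω| ^ p) ∂P) ^ ((1:ℝ)/2) := by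
          rw [lintegral_congr hsq]
      _ ≤ ((T : ENNReal) * ((T : ENNReal) * ENNReal.ofReal Cp)) ^ ((1:ℝ)/2) :=
          ENNReal.rpow_le_rpow offp (by norm_num)
      _ = (T : ENNReal) * ENNReal.ofReal (Cp ^ ((1:ℝ)/2)) := by
          have h1 : (T : ENNReal) * ((T : ENNReal) * ENNReal.ofReal Cp)
              = ((T : ENNReal) ^ (2:ℕ)) * ENNReal.ofReal Cp := by ring
          rw [h1, ENNReal.mul_rpow_of_ne_top (ENNReal.pow_ne_top (ENNReal.natCast_ne_top T))
            ENNReal.ofReal_ne_top, ← ENNReal.rpow_natCast_mul]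
          norm_num
          rw [ENNReal.ofReal_rpow_of_nonneg hCp0.le (by norm_num : (0:ℝ) ≤ 1/2)]
  -- final assembly
  calc ∫⁻ ω, ENNReal.ofReal
        (|∑ t ∈ Finset.Icc 1 T, (∑ s ∈ Finset.Icc 1 t, ε s ω) *
            (∑ m ∈ Finset.range t, cs m * ε (t - m) ω)| ^ q) ∂P
      ≤ (∫⁻ ω, ENNReal.ofReal (|∑ j ∈ Jd, g j ω| ^ q) ∂P)
        + ∫⁻ ω, ENNReal.ofReal (|∑ j ∈ Jo, g j ω| ^ q) ∂P := key1
    _ ≤ (T : ENNReal) * ENNReal.ofReal Cq + (T : ENNReal) * ENNReal.ofReal (Cp ^ ((1:ℝ)/2)) :=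
        add_le_add diag_bound offq
    _ = ENNReal.ofReal ((Cq + Cp ^ ((1:ℝ)/2)) * T) := by
        clear_value Cq Cp
        rw [show ((Cq + Cp ^ ((1:ℝ)/2)) * ((T:ℕ):ℝ)) = Cq * T + Cp ^ ((1:ℝ)/2) * T from by
            ring,
          ENNReal.ofReal_add (mul_nonneg hCq0.le (Nat.cast_nonneg T))
            (mul_nonneg (Real.rpow_nonneg hCp0.le _) (Nat.cast_nonneg T)),
          ENNReal.ofReal_mul hCq0.le, ENNReal.ofReal_mul (Real.rpow_nonneg hCp0.le _),
          ENNReal.ofReal_natCast]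
        ring
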